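/- (Closed form of the stable point.) Suppose α_i ∈ (0,1) for all i, and β_i ∈ [0,1] for all i with β_j < 1 for at least one j. Then ρ(Ψ_K Λ_β) < 1, the matrix I − Ψ_K Λ_β is invertible, and the map x ↦ Ψ_K((I − Λ_β)x* + Λ_β x) has the unique fixed point x_PS = (I − Ψ_K Λ_β)^{−1} Ψ_K (I − Λ_β) x*. -/

import Mathlib

open Matrix Filter Topology

/-- Row-normalized adjacency matrix `W = deg⁻¹ A` of a simple graph. -/
noncomputable def rowNormAdj {n : ℕ} (G : SimpleGraph (Fin n)) [DecidableRel G.Adj] :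
    Matrix (Fin n) (Fin n) ℝ :=
  Matrix.of fun i j => (G.adjMatrix ℝ) i j / (G.degree i : ℝ)

/-- The multi-step influence matrix
`Ψ_K = Σ_{k=0}^{K−1} (Λ_α W)^k (I − Λ_α) + (Λ_α W)^K`. -/
noncomputable def Psi {n : ℕ} (K : ℕ) (α : Fin n → ℝ) (W : Matrix (Fin n) (Fin n) ℝ) :
    Matrix (Fin n) (Fin n) ℝ :=
  (∑ k ∈ Finset.range K, (Matrix.diagonal α * W) ^ k * (1 - Matrix.diagonal α))
    + (Matrix.diagonal α * W) ^ K
/-- The spectral radius of a real square matrix: the maximum modulus of its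
complex eigenvalues. -/
noncomputable def specRad {n : ℕ} (M : Matrix (Fin n) (Fin n) ℝ) : ℝ :=
  sSup ((fun z : ℂ => ‖z‖) '' spectrum ℂ (M.map Complex.ofReal))

/- ------------------ auxiliary lemmas ------------------- -/

/-- Key weighted-norm bound: if `S` is entrywise nonnegative and there is a positive
vector `v` with `S v < v` entrywise, then any eigenvalue of `S` (over `ℝ` or `ℂ`)
has norm `< 1`. -/
lemma key_bound {𝕜 : Type*} [RCLike 𝕜] {n : ℕ} (S : Matrix (Fin n) (Fin n) ℝ)
    (hS : ∀ i j, 0 ≤ S i j) (v : Fin n → ℝ) (hv : ∀ i, 0 < v i)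
    (hSv : ∀ i, ∑ j, S i j * v j < v i) {z : 𝕜} {u : Fin n → 𝕜} (hu : u ≠ 0)
    (huz : (S.map (algebraMap ℝ 𝕜)) *ᵥ u = z • u) : ‖z‖ < 1 := by
  obtain ⟨j0, hj0⟩ := Function.ne_iff.mp hu
  obtain ⟨i₀, -, hmax⟩ := Finset.exists_max_image Finset.univ
    (fun i => ‖u i‖ / v i) ⟨j0, Finset.mem_univ _⟩
  have hmax' : ∀ j, ‖u j‖ / v j ≤ ‖u i₀‖ / v i₀ := fun j => hmax j (Finset.mem_univ _)
  have ht0 : 0 < ‖u i₀‖ / v i₀ :=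
    lt_of_lt_of_le (div_pos (norm_pos_iff.mpr hj0) (hv j0)) (hmax' j0)
  have hub : ∀ j, ‖u j‖ ≤ (‖u i₀‖ / v i₀) * v j := by
    intro j
    have := mul_le_mul_of_nonneg_right (hmax' j) (hv j).le
    rwa [div_mul_cancel₀ _ (hv j).ne'] at this
  have heq : ∑ j, (algebraMap ℝ 𝕜 (S i₀ j)) * u j = z * u i₀ := by
    have := congrFun huz i₀
    simpa [Matrix.mulVec, dotProduct, Matrix.map_apply] using this
  have hui : ‖u i₀‖ / v i₀ * v i₀ = ‖u i₀‖ := div_mul_cancel₀ _ (hv i₀).ne'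
  have hchain : ‖z‖ * ‖u i₀‖ < ‖u i₀‖ / v i₀ * v i₀ := by
    calc ‖z‖ * ‖u i₀‖ = ‖z * u i₀‖ := (norm_mul _ _).symm
      _ = ‖∑ j, (algebraMap ℝ 𝕜 (S i₀ j)) * u j‖ := by rw [heq]
      _ ≤ ∑ j, ‖(algebraMap ℝ 𝕜 (S i₀ j)) * u j‖ := norm_sum_le _ _
      _ = ∑ j, S i₀ j * ‖u j‖ := by
          refine Finset.sum_congr rfl fun j _ => ?_
          rw [norm_mul, norm_algebraMap']
          rw [Real.norm_eq_abs, abs_of_nonneg (hS i₀ j)]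
      _ ≤ ∑ j, S i₀ j * ((‖u i₀‖ / v i₀) * v j) := by
          refine Finset.sum_le_sum fun j _ => ?_
          exact mul_le_mul_of_nonneg_left (hub j) (hS i₀ j)
      _ = (‖u i₀‖ / v i₀) * ∑ j, S i₀ j * v j := by
          rw [Finset.mul_sum]; refine Finset.sum_congr rfl fun j _ => by ring
      _ < (‖u i₀‖ / v i₀) * v i₀ := mul_lt_mul_of_pos_left (hSv i₀) ht0
  rw [hui] at hchain
  have hpos : 0 < ‖u i₀‖ := by rw [← hui]; exact mul_pos ht0 (hv i₀)
  exact (mul_lt_iff_lt_one_left hpos).mp hchain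

lemma eigen_of_mem_spectrum {n : ℕ} {𝕜 : Type*} [Field 𝕜] (M : Matrix (Fin n) (Fin n) 𝕜)
    {z : 𝕜} (hz : z ∈ spectrum 𝕜 M) : ∃ u : Fin n → 𝕜, u ≠ 0 ∧ M *ᵥ u = z • u := by
  have hnu := spectrum.mem_iff.mp hz
  have hdet : (algebraMap 𝕜 (Matrix (Fin n) (Fin n) 𝕜) z - M).det = 0 := by
    by_contra h
    exact hnu ((Matrix.isUnit_iff_isUnit_det _).mpr (isUnit_iff_ne_zero.mpr h))
  obtain ⟨u, hu0, hu⟩ := (Matrix.exists_mulVec_eq_zero_iff).mpr hdet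
  refine ⟨u, hu0, ?_⟩
  have h1 : algebraMap 𝕜 (Matrix (Fin n) (Fin n) 𝕜) z *ᵥ u - M *ᵥ u = 0 := by
    rw [← Matrix.sub_mulVec, hu]
  have h2 : M *ᵥ u = algebraMap 𝕜 (Matrix (Fin n) (Fin n) 𝕜) z *ᵥ u := (sub_eq_zero.mp h1).symm
  rw [h2, Algebra.algebraMap_eq_smul_one, Matrix.smul_mulVec, Matrix.one_mulVec]

set_option maxHeartbeats 1000000 in
/-- closed form of the stable point.  If `α_i ∈ (0,1)` for all
`i` and `β_j < 1` for some `j`, then `ρ(Ψ_K Λ_β) < 1`, `I − Ψ_K Λ_β` is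
invertible and the unique fixed point of `x ↦ Ψ_K((I − Λ_β)x* + Λ_β x)` is
`x_PS = (I − Ψ_K Λ_β)⁻¹ Ψ_K (I − Λ_β) x*`. -/
theorem closed_form_stable_point {n : ℕ} (hn : 2 ≤ n) (G : SimpleGraph (Fin n))
    [DecidableRel G.Adj] (hG : G.Connected) (K : ℕ) (hK : 1 ≤ K)
    (α β : Fin n → ℝ) (hα : ∀ i, α i ∈ Set.Ioo (0 : ℝ) 1)
    (hβ : ∀ i, β i ∈ Set.Icc (0 : ℝ) 1) (hβlt : ∃ j, β j < 1)
    (xstar : Fin n → ℝ) (hx : ∀ i, xstar i ∈ Set.Icc (0 : ℝ) 1) :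
    specRad (Psi K α (rowNormAdj G) * Matrix.diagonal β) < 1 ∧
    IsUnit (1 - Psi K α (rowNormAdj G) * Matrix.diagonal β) ∧
    ∀ x : Fin n → ℝ,
      (x = Psi K α (rowNormAdj G) *ᵥ
          ((1 - Matrix.diagonal β) *ᵥ xstar + Matrix.diagonal β *ᵥ x)) ↔
      x = ((1 - Psi K α (rowNormAdj G) * Matrix.diagonal β)⁻¹ *
            (Psi K α (rowNormAdj G) * (1 - Matrix.diagonal β))) *ᵥ xstar := by
  haveI hnem : Nonempty (Fin n) := ⟨⟨0, by omega⟩⟩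
  haveI hnt : Nontrivial (Fin n) := ⟨⟨0, by omega⟩, ⟨1, by omega⟩, by
    intro h
    have := congrArg Fin.val h
    simp at this⟩
  have hα0 : ∀ i, 0 < α i := fun i => (hα i).1
  have hα1 : ∀ i, α i < 1 := fun i => (hα i).2
  have hβ0 : ∀ i, 0 ≤ β i := fun i => (hβ i).1
  have hβ1 : ∀ i, β i ≤ 1 := fun i => (hβ i).2
  -- degrees are positive
  have hdeg : ∀ i, 0 < G.degree i := by
    intro i
    rw [SimpleGraph.degree_pos_iff_exists_adj]
    obtain ⟨j, hj⟩ := exists_ne i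
    obtain ⟨p⟩ := hG.preconnected i j
    have hp : ¬ p.Nil := SimpleGraph.Walk.not_nil_of_ne hj.symm
    exact ⟨_, p.adj_snd hp⟩
  have hdegn : ∀ i, (G.degree i : ℝ) ≤ n := by
    intro i
    have h1 : G.degree i ≤ n := by
      show (G.neighborFinset i).card ≤ n
      have h2 := Finset.card_le_univ (G.neighborFinset i)
      simpa using h2
    exact_mod_cast h1
  have hdegpos : ∀ i, (0:ℝ) < (G.degree i : ℝ) := fun i => by exact_mod_cast hdeg i
  -- facts about W
  have hadj01 : ∀ i j : Fin n, (0:ℝ) ≤ (G.adjMatrix ℝ) i j := by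
    intro i j
    rw [SimpleGraph.adjMatrix_apply]
    split <;> norm_num
  have hW0 : ∀ i j, 0 ≤ rowNormAdj G i j := by
    intro i j
    show 0 ≤ (G.adjMatrix ℝ) i j / (G.degree i : ℝ)
    exact div_nonneg (hadj01 i j) (hdegpos i).le
  have hWrow : ∀ i, ∑ j, rowNormAdj G i j = 1 := by
    intro i
    show (∑ j, (G.adjMatrix ℝ) i j / (G.degree i : ℝ)) = 1
    rw [← Finset.sum_div]
    have hs : ∑ j, (G.adjMatrix ℝ) i j = (G.degree i : ℝ) := by
      have := SimpleGraph.adjMatrix_mulVec_const_apply (G := G) (α := ℝ) (a := 1) (v := i)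
      simpa [Matrix.mulVec, dotProduct] using this
    rw [hs, div_self (hdegpos i).ne']
  have hWadj : ∀ i j, G.Adj i j → 1 / (n:ℝ) ≤ rowNormAdj G i j := by
    intro i j hij
    show 1 / (n:ℝ) ≤ (G.adjMatrix ℝ) i j / (G.degree i : ℝ)
    rw [SimpleGraph.adjMatrix_apply, if_pos hij]
    exact one_div_le_one_div_of_le (hdegpos i) (hdegn i)
  -- Psi facts
  have hM0 : ∀ i j, 0 ≤ (Matrix.diagonal α * rowNormAdj G) i j := by
    intro i j
    rw [Matrix.diagonal_mul]
    exact mul_nonneg (hα0 i).le (hW0 i j)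
  have hMk0 : ∀ k, ∀ i j, 0 ≤ ((Matrix.diagonal α * rowNormAdj G) ^ k) i j := by
    intro k
    induction k with
    | zero => intro i j; rw [pow_zero]; by_cases h : i = j <;> simp [Matrix.one_apply, h]
    | succ m ih =>
      intro i j
      rw [pow_succ, Matrix.mul_apply]
      exact Finset.sum_nonneg fun l _ => mul_nonneg (ih i l) (hM0 l j)
  have h1D : (1 : Matrix (Fin n) (Fin n) ℝ) - Matrix.diagonal α
      = Matrix.diagonal (fun i => 1 - α i) := by
    rw [← Matrix.diagonal_one, Matrix.diagonal_sub]
  have hT0 : ∀ k, ∀ i j, 0 ≤ ((Matrix.diagonal α * rowNormAdj G) ^ k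
      * ((1:Matrix (Fin n) (Fin n) ℝ) - Matrix.diagonal α)) i j := by
    intro k i j
    rw [h1D, Matrix.mul_diagonal]
    exact mul_nonneg (hMk0 k i j) (by have := hα1 j; linarith)
  have hΨ0 : ∀ i j, 0 ≤ Psi K α (rowNormAdj G) i j := by
    intro i j
    rw [Psi, Matrix.add_apply, Matrix.sum_apply]
    exact add_nonneg (Finset.sum_nonneg fun k _ => hT0 k i j) (hMk0 K i j)
  -- row sums of Psi are 1
  have hW1 : rowNormAdj G *ᵥ (fun _ => (1:ℝ)) = fun _ => 1 := by
    funext i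
    simp only [Matrix.mulVec, dotProduct, mul_one]
    exact hWrow i
  have hΨ1 : ∀ K', Psi K' α (rowNormAdj G) *ᵥ (fun _ => (1:ℝ)) = fun _ => 1 := by
    intro K'
    induction K' with
    | zero => simp [Psi, Matrix.one_mulVec]
    | succ m ih =>
      have hstep : Psi (m+1) α (rowNormAdj G) = Psi m α (rowNormAdj G)
          + ((Matrix.diagonal α * rowNormAdj G) ^ m * Matrix.diagonal α)
            * (rowNormAdj G - 1) := by
        rw [Psi, Psi, Finset.sum_range_succ, pow_succ]
        noncomm_ring
      rw [hstep, Matrix.add_mulVec, ih, ← Matrix.mulVec_mulVec, Matrix.sub_mulVec, hW1,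
        Matrix.one_mulVec]
      funext i
      simp [Matrix.mulVec_zero]
  have hΨrow : ∀ i, ∑ j, Psi K α (rowNormAdj G) i j = 1 := by
    intro i
    have := congrFun (hΨ1 K) i
    simpa [Matrix.mulVec, dotProduct] using this
  -- lower bounds on Psi entries
  have hΨdiag : ∀ i, 1 - α i ≤ Psi K α (rowNormAdj G) i i := by
    intro i
    rw [Psi, Matrix.add_apply, Matrix.sum_apply]
    have h0mem : (0:ℕ) ∈ Finset.range K := Finset.mem_range.mpr (by omega)
    have hterm := Finset.single_le_sum
      (f := fun k => ((Matrix.diagonal α * rowNormAdj G) ^ k * ((1:Matrix (Fin n) (Fin n) ℝ) - Matrix.diagonal α)) i i)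
      (fun k _ => hT0 k i i) h0mem
    have h00 : ((Matrix.diagonal α * rowNormAdj G) ^ 0 * ((1:Matrix (Fin n) (Fin n) ℝ) - Matrix.diagonal α)) i i
        = 1 - α i := by
      rw [pow_zero, one_mul, h1D, Matrix.diagonal_apply_eq]
    have hterm' : 1 - α i ≤ ∑ k ∈ Finset.range K,
        ((Matrix.diagonal α * rowNormAdj G) ^ k * ((1:Matrix (Fin n) (Fin n) ℝ) - Matrix.diagonal α)) i i := by
      rw [← h00]; exact hterm
    have := hMk0 K i i
    linarith
  have hΨadj : ∀ i j, G.Adj i j →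
      α i * rowNormAdj G i j * (1 - α j) ≤ Psi K α (rowNormAdj G) i j := by
    intro i j hij
    have hij' : i ≠ j := G.ne_of_adj hij
    rcases eq_or_lt_of_le hK with hK1 | hK2
    · -- K = 1
      rw [Psi, ← hK1]
      rw [Matrix.add_apply, Matrix.sum_apply]
      rw [Finset.sum_range_one]
      have e1 : ((Matrix.diagonal α * rowNormAdj G) ^ 0 * ((1:Matrix (Fin n) (Fin n) ℝ) - Matrix.diagonal α)) i j = 0 := by
        rw [pow_zero, one_mul, h1D, Matrix.diagonal_apply_ne _ hij']
      have e2 : ((Matrix.diagonal α * rowNormAdj G) ^ 1) i j = α i * rowNormAdj G i j := by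
        rw [pow_one, Matrix.diagonal_mul]
      rw [e1, e2, zero_add]
      have hnn : 0 ≤ α i * rowNormAdj G i j := mul_nonneg (hα0 i).le (hW0 i j)
      nlinarith [hα0 j, hα1 j]
    · -- K ≥ 2
      rw [Psi, Matrix.add_apply, Matrix.sum_apply]
      have h1mem : (1:ℕ) ∈ Finset.range K := Finset.mem_range.mpr (by omega)
      have hterm := Finset.single_le_sum
        (f := fun k => ((Matrix.diagonal α * rowNormAdj G) ^ k * ((1:Matrix (Fin n) (Fin n) ℝ) - Matrix.diagonal α)) i j)
        (fun k _ => hT0 k i j) h1mem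
      have h11 : ((Matrix.diagonal α * rowNormAdj G) ^ 1 * ((1:Matrix (Fin n) (Fin n) ℝ) - Matrix.diagonal α)) i j
          = α i * rowNormAdj G i j * (1 - α j) := by
        rw [pow_one, h1D, Matrix.mul_diagonal, Matrix.diagonal_mul]
      have hterm' : α i * rowNormAdj G i j * (1 - α j) ≤ ∑ k ∈ Finset.range K,
          ((Matrix.diagonal α * rowNormAdj G) ^ k * ((1:Matrix (Fin n) (Fin n) ℝ) - Matrix.diagonal α)) i j := by
        rw [← h11]; exact hterm
      have := hMk0 K i j
      linarith
  -- constants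
  obtain ⟨j₀, hj₀⟩ := hβlt
  set w0 : ℝ := 1 - β j₀ with hw0def
  have hw0 : 0 < w0 := by simp [hw0def]; linarith
  have hw0le : w0 ≤ 1 := by have := hβ0 j₀; simp [hw0def]; linarith
  set amin : ℝ := Finset.univ.inf' Finset.univ_nonempty α with hamin
  set bmin : ℝ := Finset.univ.inf' Finset.univ_nonempty (fun i => 1 - α i) with hbmin
  have haminpos : 0 < amin := by
    rw [hamin, Finset.lt_inf'_iff]
    exact fun i _ => hα0 i
  have hbminpos : 0 < bmin := by
    rw [hbmin, Finset.lt_inf'_iff]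
    exact fun i _ => by have := hα1 i; linarith
  have hamin1 : amin ≤ 1 := by
    obtain ⟨i⟩ := hnem
    calc amin ≤ α i := Finset.inf'_le _ (Finset.mem_univ i)
      _ ≤ 1 := (hα1 i).le
  have hbmin1 : bmin ≤ 1 := by
    obtain ⟨i⟩ := hnem
    calc bmin ≤ 1 - α i := Finset.inf'_le _ (Finset.mem_univ i)
      _ ≤ 1 := by have := hα0 i; linarith
  have hnpos : (0:ℝ) < n := by positivity
  have hninv1 : 1 / (n:ℝ) ≤ 1 := by
    rw [div_le_one hnpos]; exact_mod_cast (by omega : 1 ≤ n)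
  set c0 : ℝ := amin * (1 / n) * bmin with hc0def
  have hc0pos : 0 < c0 := by
    apply mul_pos (mul_pos haminpos (by positivity)) hbminpos
  have hc0le1 : c0 ≤ 1 := by
    calc c0 ≤ 1 * (1/(n:ℝ)) * 1 := by
          apply mul_le_mul (mul_le_mul hamin1 le_rfl (by positivity) (by norm_num)) hbmin1
            hbminpos.le (by positivity)
      _ ≤ 1 := by simpa using hninv1
  have hc0Ψ : ∀ i j, G.Adj i j → c0 ≤ Psi K α (rowNormAdj G) i j := by
    intro i j hij
    refine le_trans ?_ (hΨadj i j hij)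
    rw [hc0def]
    have h1 : amin ≤ α i := Finset.inf'_le _ (Finset.mem_univ i)
    have h2 : bmin ≤ 1 - α j := Finset.inf'_le _ (Finset.mem_univ j)
    have h3 : 1/(n:ℝ) ≤ rowNormAdj G i j := hWadj i j hij
    have h4 : (0:ℝ) ≤ 1/(n:ℝ) := by positivity
    have e1 : amin * (1/(n:ℝ)) ≤ α i * rowNormAdj G i j :=
      mul_le_mul h1 h3 h4 (hα0 i).le
    exact mul_le_mul e1 h2 hbminpos.le (mul_nonneg (hα0 i).le (hW0 i j))
  set δ : ℝ := (1 - α j₀) * w0 * c0 / 4 with hδdef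
  have hαj₀ : 0 < 1 - α j₀ := by have := hα1 j₀; linarith
  have hprod : 0 < (1 - α j₀) * w0 := mul_pos hαj₀ hw0
  have hprod1 : (1 - α j₀) * w0 ≤ 1 := by nlinarith [hα0 j₀]
  have hδpos : 0 < δ := by rw [hδdef]; positivity
  have hδlt : δ < (1 - α j₀) * w0 := by
    rw [hδdef]; nlinarith [hprod, hc0pos, hc0le1]
  have hδc0 : δ ≤ c0 / 2 := by
    rw [hδdef]; nlinarith [mul_nonneg (sub_nonneg.mpr hprod1) hc0pos.le]
  have hδhalf : δ ≤ 1 / 2 := le_trans hδc0 (by linarith)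
  set c : ℝ := c0 / 4 with hcdef
  have hcpos : 0 < c := by rw [hcdef]; positivity
  have hcle1 : c ≤ 1 := by rw [hcdef]; linarith
  -- the weight vector
  set v : Fin n → ℝ := fun i => 1 - δ * c ^ (G.dist i j₀) with hvdef
  have hvpos : ∀ i, 0 < v i := by
    intro i
    have h1 : c ^ (G.dist i j₀) ≤ 1 := pow_le_one₀ hcpos.le hcle1
    have h2 : 0 ≤ c ^ (G.dist i j₀) := by positivity
    have h3 : δ * c ^ (G.dist i j₀) ≤ δ := by nlinarith
    simp only [hvdef]
    nlinarith
  -- entries of S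
  have hSapp : ∀ i j, (Psi K α (rowNormAdj G) * Matrix.diagonal β) i j
      = Psi K α (rowNormAdj G) i j * β j := by
    intro i j; rw [Matrix.mul_diagonal]
  have hS0 : ∀ i j, 0 ≤ (Psi K α (rowNormAdj G) * Matrix.diagonal β) i j := by
    intro i j; rw [hSapp]; exact mul_nonneg (hΨ0 i j) (hβ0 j)
  -- the crucial strict inequality S v < v
  have hSv : ∀ i, ∑ j, (Psi K α (rowNormAdj G) * Matrix.diagonal β) i j * v j < v i := by
    intro i
    have hexp : ∑ j, (Psi K α (rowNormAdj G) * Matrix.diagonal β) i j * v j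
        = (1 - ∑ j, Psi K α (rowNormAdj G) i j * (1 - β j))
          - δ * ∑ j, Psi K α (rowNormAdj G) i j * β j * c ^ (G.dist j j₀) := by
      have e1 : ∀ j, (Psi K α (rowNormAdj G) * Matrix.diagonal β) i j * v j
          = Psi K α (rowNormAdj G) i j * β j
            - δ * (Psi K α (rowNormAdj G) i j * β j * c ^ (G.dist j j₀)) := by
        intro j; rw [hSapp]; simp only [hvdef]; ring
      rw [Finset.sum_congr rfl (fun j _ => e1 j), Finset.sum_sub_distrib, ← Finset.mul_sum]
      have e2 : ∑ j, Psi K α (rowNormAdj G) i j * β j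
          = 1 - ∑ j, Psi K α (rowNormAdj G) i j * (1 - β j) := by
        have : ∑ j, Psi K α (rowNormAdj G) i j * β j
            + ∑ j, Psi K α (rowNormAdj G) i j * (1 - β j)
            = ∑ j, Psi K α (rowNormAdj G) i j := by
          rw [← Finset.sum_add_distrib]
          exact Finset.sum_congr rfl fun j _ => by ring
        rw [hΨrow i] at this
        linarith
      rw [e2]
    rw [hexp]
    simp only [hvdef]
    -- goal: 1 - A - δ*B < 1 - δ * c ^ dist i j₀, i.e. δ c^di < A + δ B
    have hA0 : ∀ j, 0 ≤ Psi K α (rowNormAdj G) i j * (1 - β j) :=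
      fun j => mul_nonneg (hΨ0 i j) (by have := hβ1 j; linarith)
    have hB0 : ∀ j, 0 ≤ Psi K α (rowNormAdj G) i j * β j * c ^ (G.dist j j₀) :=
      fun j => mul_nonneg (mul_nonneg (hΨ0 i j) (hβ0 j)) (by positivity)
    have hAsum : ∀ j, Psi K α (rowNormAdj G) i j * (1 - β j)
        ≤ ∑ j', Psi K α (rowNormAdj G) i j' * (1 - β j') :=
      fun j => Finset.single_le_sum (fun j' _ => hA0 j') (Finset.mem_univ j)
    have hBsum : ∀ j, Psi K α (rowNormAdj G) i j * β j * c ^ (G.dist j j₀)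
        ≤ ∑ j', Psi K α (rowNormAdj G) i j' * β j' * c ^ (G.dist j' j₀) :=
      fun j => Finset.single_le_sum (fun j' _ => hB0 j') (Finset.mem_univ j)
    have hBsum0 : 0 ≤ ∑ j', Psi K α (rowNormAdj G) i j' * β j' * c ^ (G.dist j' j₀) :=
      Finset.sum_nonneg fun j' _ => hB0 j'
    have hAsum0 : 0 ≤ ∑ j', Psi K α (rowNormAdj G) i j' * (1 - β j') :=
      Finset.sum_nonneg fun j' _ => hA0 j'
    by_cases hdist : G.dist i j₀ = 0
    · -- i = j₀
      have hi : i = j₀ := (hG.dist_eq_zero_iff).mp hdist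
      subst hi
      rw [hdist, pow_zero, mul_one]
      have h1 : (1 - α i) * w0 ≤ Psi K α (rowNormAdj G) i i * (1 - β i) := by
        rw [← hw0def]  -- w0 = 1 - β i here since i = j₀
        exact mul_le_mul (hΨdiag i) le_rfl hw0.le
          (le_trans (by have := hα1 i; linarith) (hΨdiag i))
      have h2 := hAsum i
      have hδB : 0 ≤ δ * ∑ j', Psi K α (rowNormAdj G) i j' * β j' * c ^ (G.dist j' i) :=
        mul_nonneg hδpos.le hBsum0
      linarith
    · -- dist ≥ 1 : pick a neighbour closer to j₀
      have hreach : G.Reachable i j₀ := hG.preconnected i j₀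
      obtain ⟨p, hp⟩ := hreach.exists_walk_length_eq_dist
      have hplen : p.length ≠ 0 := by rw [hp]; exact hdist
      obtain ⟨m, hm⟩ : ∃ m, G.dist i j₀ = m + 1 :=
        ⟨G.dist i j₀ - 1, by omega⟩
      -- second vertex of p
      cases p with
      | nil => simp at hplen
      | @cons _ j' _ hadj q =>
        have hqlen : q.length = m := by
          have : q.length + 1 = G.dist i j₀ := by
            simpa [SimpleGraph.Walk.length_cons] using hp
          omega
        have hdj' : G.dist j' j₀ ≤ m := by
          rw [← hqlen]; exact SimpleGraph.dist_le q
        have hcd : c ^ m ≤ c ^ (G.dist j' j₀) :=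
          pow_le_pow_of_le_one hcpos.le hcle1 hdj'
        have hΨc0 : c0 ≤ Psi K α (rowNormAdj G) i j' := hc0Ψ i j' hadj
        rw [hm, pow_succ]
        have hcm0 : (0:ℝ) < c ^ m := by positivity
        by_cases hb : β j' ≤ 1/2
        · -- weight on the (1-β) sum
          have h1 : c0 * (1/2) ≤ Psi K α (rowNormAdj G) i j' * (1 - β j') := by
            apply mul_le_mul hΨc0 (by linarith) (by norm_num) (le_trans hc0pos.le hΨc0)
          have h2 := hAsum j'
          have h3 : δ * (c ^ m * c) ≤ (c0/2) * (c0/4) := by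
            have hcm1 : c ^ m ≤ 1 := pow_le_one₀ hcpos.le hcle1
            have : c ^ m * c ≤ c := by nlinarith
            rw [hcdef] at this ⊢
            nlinarith
          have h4 : (c0/2) * (c0/4) < c0 * (1/2) := by nlinarith
          have hδB : 0 ≤ δ * ∑ j'', Psi K α (rowNormAdj G) i j'' * β j'' * c ^ (G.dist j'' j₀) :=
            mul_nonneg hδpos.le hBsum0
          linarith
        · -- weight on the β-c^d sum
          push_neg at hb
          have h1 : c0 * (1/2) * c ^ m
              ≤ Psi K α (rowNormAdj G) i j' * β j' * c ^ (G.dist j' j₀) := by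
            apply mul_le_mul _ hcd hcm0.le
              (mul_nonneg (hΨ0 i j') (hβ0 j'))
            apply mul_le_mul hΨc0 hb.le (by norm_num) (le_trans hc0pos.le hΨc0)
          have h2 := hBsum j'
          have h3 : δ * (c ^ m * c) < δ * (c0 * (1/2) * c ^ m) := by
            have h6 : c < c0 * (1/2) := by rw [hcdef]; linarith
            have hlt : c ^ m * c < c0 * (1/2) * c ^ m := by
              calc c ^ m * c < c ^ m * (c0 * (1/2)) := mul_lt_mul_of_pos_left h6 hcm0
                _ = c0 * (1/2) * c ^ m := by ring
            exact mul_lt_mul_of_pos_left hlt hδpos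
          have h5 : δ * (c0 * (1/2) * c ^ m)
              ≤ δ * ∑ j'', Psi K α (rowNormAdj G) i j'' * β j'' * c ^ (G.dist j'' j₀) :=
            mul_le_mul_of_nonneg_left (le_trans h1 h2) hδpos.le
          linarith [hAsum0]
  -- ρ(S) < 1
  have hmapeq : (Psi K α (rowNormAdj G) * Matrix.diagonal β).map Complex.ofReal
      = (Psi K α (rowNormAdj G) * Matrix.diagonal β).map (algebraMap ℝ ℂ) := rfl
  have hspec : ∀ z ∈ spectrum ℂ
      ((Psi K α (rowNormAdj G) * Matrix.diagonal β).map Complex.ofReal),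
      ‖z‖ < 1 := by
    intro z hz
    rw [hmapeq] at hz
    obtain ⟨u, hu0, hu⟩ := eigen_of_mem_spectrum _ hz
    have := key_bound (𝕜 := ℂ) _ hS0 v hvpos hSv hu0 hu
    simpa using this
  have hρ : specRad (Psi K α (rowNormAdj G) * Matrix.diagonal β) < 1 := by
    rw [specRad]
    set M' := (Psi K α (rowNormAdj G) * Matrix.diagonal β).map Complex.ofReal with hM'
    have hfin : (spectrum ℂ M').Finite := Matrix.finite_spectrum M'
    have hne : (spectrum ℂ M').Nonempty := by
      exact spectrum.nonempty_of_isAlgClosed_of_finiteDimensional ℂ M'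
    have hnei : ((fun z : ℂ => ‖z‖) '' spectrum ℂ M').Nonempty := hne.image _
    have hfini : ((fun z : ℂ => ‖z‖) '' spectrum ℂ M').Finite := hfin.image _
    have hmem := hnei.csSup_mem hfini
    obtain ⟨z, hz, hze⟩ := hmem
    rw [← hze]
    exact hspec z hz
  -- invertibility
  have hunit : IsUnit (1 - Psi K α (rowNormAdj G) * Matrix.diagonal β) := by
    rw [Matrix.isUnit_iff_isUnit_det, isUnit_iff_ne_zero]
    intro hdet
    obtain ⟨u, hu0, hu⟩ := Matrix.exists_mulVec_eq_zero_iff.mpr hdet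
    have hSu : (Psi K α (rowNormAdj G) * Matrix.diagonal β) *ᵥ u = (1:ℝ) • u := by
      have h1 : (1:Matrix (Fin n) (Fin n) ℝ) *ᵥ u
          - (Psi K α (rowNormAdj G) * Matrix.diagonal β) *ᵥ u = 0 := by
        rw [← Matrix.sub_mulVec, hu]
      have h2 := sub_eq_zero.mp h1
      rw [Matrix.one_mulVec] at h2
      rw [← h2, one_smul]
    have hmap : ((Psi K α (rowNormAdj G) * Matrix.diagonal β).map (algebraMap ℝ ℝ)) *ᵥ u
        = (1:ℝ) • u := by
      have : (Psi K α (rowNormAdj G) * Matrix.diagonal β).map (algebraMap ℝ ℝ)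
          = Psi K α (rowNormAdj G) * Matrix.diagonal β := by
        ext i j; simp [Matrix.map_apply]
      rw [this]; exact hSu
    have := key_bound (𝕜 := ℝ) _ hS0 v hvpos hSv hu0 hmap
    simp at this
  refine ⟨hρ, hunit, ?_⟩
  -- the fixed point characterization
  intro x
  have hdet : IsUnit (1 - Psi K α (rowNormAdj G) * Matrix.diagonal β).det :=
    (Matrix.isUnit_iff_isUnit_det _).mp hunit
  have hinvmul : (1 - Psi K α (rowNormAdj G) * Matrix.diagonal β)⁻¹
      * (1 - Psi K α (rowNormAdj G) * Matrix.diagonal β) = 1 :=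
    Matrix.nonsing_inv_mul _ hdet
  have hmulinv : (1 - Psi K α (rowNormAdj G) * Matrix.diagonal β)
      * (1 - Psi K α (rowNormAdj G) * Matrix.diagonal β)⁻¹ = 1 :=
    Matrix.mul_nonsing_inv _ hdet
  have hstep : ∀ y : Fin n → ℝ,
      (y = Psi K α (rowNormAdj G) *ᵥ ((1 - Matrix.diagonal β) *ᵥ xstar
        + Matrix.diagonal β *ᵥ y))
      ↔ (1 - Psi K α (rowNormAdj G) * Matrix.diagonal β) *ᵥ y
          = (Psi K α (rowNormAdj G) * (1 - Matrix.diagonal β)) *ᵥ xstar := by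
    intro y
    rw [Matrix.mulVec_add, Matrix.mulVec_mulVec, Matrix.mulVec_mulVec]
    constructor
    · intro h
      rw [Matrix.sub_mulVec, Matrix.one_mulVec]
      nth_rewrite 1 [h]
      abel
    · intro h
      rw [Matrix.sub_mulVec, Matrix.one_mulVec] at h
      have := congrArg (· + (Psi K α (rowNormAdj G) * Matrix.diagonal β) *ᵥ y) h
      simp only [sub_add_cancel] at this
      exact this
  rw [hstep x]
  constructor
  · intro h
    have h2 : ((1 - Psi K α (rowNormAdj G) * Matrix.diagonal β)⁻¹
        * (1 - Psi K α (rowNormAdj G) * Matrix.diagonal β)) *ᵥ x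
        = ((1 - Psi K α (rowNormAdj G) * Matrix.diagonal β)⁻¹
          * (Psi K α (rowNormAdj G) * (1 - Matrix.diagonal β))) *ᵥ xstar := by
      rw [← Matrix.mulVec_mulVec, h, Matrix.mulVec_mulVec]
    rwa [hinvmul, Matrix.one_mulVec] at h2
  · intro h
    rw [h, Matrix.mulVec_mulVec, ← Matrix.mul_assoc, ← Matrix.mul_assoc, hmulinv,
      Matrix.one_mul]
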